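/- (De Giorgi-type counter-example: sharp integrability.) Let ξ ≠ 0 be a real number, set ε = |ξ|/√(4 + ξ²), and define u : ℝ² \ {0} → ℝ² by u(x) = (|x|^ε − |x|^{−ε}) x/|x|. Then u vanishes on the unit circle {x : |x| = 1}, and for every q ∈ (1, ∞) one has ∫_{\{|x| > 1\}} |∇u(x)|^q dx < ∞ if and only if q > 2/(1 − ε). In particular ∇u is not square-integrable on {x : |x| > 1}. -/

import Mathlib

open MeasureTheory Metric Set
open scoped ENNReal

noncomputable section

abbrev V2 := EuclideanSpace ℝ (Fin 2)
abbrev Mat2 := Matrix (Fin 2) (Fin 2) ℝ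

/-- Frobenius inner product of 2×2 matrices. -/
def frobInner (A B : Mat2) : ℝ := ∑ i, ∑ j, A i j * B i j

/-- Square of the Frobenius norm. -/
def frobNormSq (A : Mat2) : ℝ := ∑ i, ∑ j, (A i j) ^ 2

/-- Frobenius norm. -/
def frobNorm (A : Mat2) : ℝ := Real.sqrt (frobNormSq A)

/-- Gradient matrix of a map `u : ℝ² → ℝ²`: `(grad u x) i j = ∂_{x_j} u_i (x)`. -/
def grad (u : V2 → V2) (x : V2) : Mat2 :=
  Matrix.of fun i j => fderiv ℝ u x (EuclideanSpace.single j 1) i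

/-- The explicit radial field `u(x) = (|x|^ε - |x|^{-ε}) x/|x|` with
`ε = |ξ|/√(4 + ξ²)`. -/
def deGiorgiField (ξ : ℝ) (x : V2) : V2 :=
  (‖x‖ ^ (|ξ| / Real.sqrt (4 + ξ ^ 2)) -
    ‖x‖ ^ (-(|ξ| / Real.sqrt (4 + ξ ^ 2)))) • (‖x‖⁻¹ • x)

/-! ### Auxiliary definitions -/

def hfun (ε : ℝ) (s : ℝ) : ℝ := s ^ ((ε-1)/2) - s ^ ((-ε-1)/2)

def hderiv (ε : ℝ) (s : ℝ) : ℝ :=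
  ((ε-1)/2) * s ^ ((ε-1)/2 - 1) - ((-ε-1)/2) * s ^ ((-ε-1)/2 - 1)

def Ufield (ε : ℝ) (x : V2) : V2 := hfun ε (‖x‖^2) • x

def Gfun (ε r : ℝ) : ℝ :=
  Real.sqrt ((r^(ε-1) - r^(-ε-1))^2 + ε^2 * (r^(ε-1) + r^(-ε-1))^2)

lemma rpow_sq_half (r c : ℝ) (hr : 0 < r) : (r^2) ^ (c/2) = r ^ c := by
  rw [← Real.rpow_natCast r 2, ← Real.rpow_mul hr.le]
  congr 1
  ring

lemma fderiv_U_apply {ε : ℝ} (x : V2) (hx : x ≠ 0) (i j : Fin 2) :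
    fderiv ℝ (Ufield ε) x (EuclideanSpace.single j 1) i =
      hfun ε (‖x‖^2) * (if i = j then 1 else 0) + (2 * hderiv ε (‖x‖^2)) * (x j * x i) := by
  have hx2 : ‖x‖ ≠ 0 := norm_ne_zero_iff.mpr hx
  have hs : (0:ℝ) < ‖x‖^2 := by positivity
  have h1 : HasDerivAt (hfun ε) (hderiv ε (‖x‖^2)) (‖x‖^2) := by
    exact (Real.hasDerivAt_rpow_const (Or.inl hs.ne')).sub
      (Real.hasDerivAt_rpow_const (Or.inl hs.ne'))
  have h2 : HasFDerivAt (fun y : V2 => ‖y‖^2) (2 • (innerSL ℝ x)) x := by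
    simpa using (hasFDerivAt_id x).norm_sq
  have h3 : HasFDerivAt (fun y : V2 => hfun ε (‖y‖^2))
      ((hderiv ε (‖x‖^2)) • (2 • (innerSL ℝ x))) x := (h1.comp_hasFDerivAt x h2 :)
  have h4 : HasFDerivAt (Ufield ε)
      (hfun ε (‖x‖^2) • ContinuousLinearMap.id ℝ V2
        + ((hderiv ε (‖x‖^2)) • (2 • (innerSL ℝ x))).smulRight x) x :=
    h3.smul (hasFDerivAt_id x)
  rw [h4.fderiv]
  have hinner : (inner ℝ x (EuclideanSpace.single j (1:ℝ)) : ℝ) = x j := by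
    simp [EuclideanSpace.inner_single_right]
  simp only [ContinuousLinearMap.add_apply, ContinuousLinearMap.smul_apply,
    ContinuousLinearMap.id_apply, ContinuousLinearMap.smulRight_apply, coe_innerSL_apply,
    innerSL_apply_apply, hinner, PiLp.add_apply, PiLp.smul_apply, smul_eq_mul,
    EuclideanSpace.single_apply]
  by_cases h : i = j <;> simp [h, eq_comm] <;> ring

lemma frobNormSq_U {ε : ℝ} (x : V2) (hx : x ≠ 0) :
    frobNormSq (grad (Ufield ε) x) =
      (‖x‖^(ε-1) - ‖x‖^(-ε-1))^2 + ε^2 * (‖x‖^(ε-1) + ‖x‖^(-ε-1))^2 := by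
  have hr : (0:ℝ) < ‖x‖ := norm_pos_iff.mpr hx
  have hs : (0:ℝ) < ‖x‖^2 := by positivity
  have hsum : x 0^2 + x 1^2 = ‖x‖^2 := by
    rw [EuclideanSpace.norm_eq, Real.sq_sqrt (by positivity)]
    simp [Fin.sum_univ_two, sq_abs]
  have hH : hfun ε (‖x‖^2) = ‖x‖^(ε-1) - ‖x‖^(-ε-1) := by
    rw [hfun, rpow_sq_half _ _ hr, rpow_sq_half _ _ hr]
  have hCs : (2 * hderiv ε (‖x‖^2)) * (‖x‖^2) =
      (ε-1) * ‖x‖^(ε-1) + (ε+1) * ‖x‖^(-ε-1) := by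
    rw [hderiv, Real.rpow_sub_one hs.ne', Real.rpow_sub_one hs.ne',
      rpow_sq_half _ _ hr, rpow_sq_half _ _ hr]
    field_simp
    ring
  simp only [frobNormSq, grad, Fin.sum_univ_two, Matrix.of_apply]
  rw [fderiv_U_apply x hx, fderiv_U_apply x hx, fderiv_U_apply x hx, fderiv_U_apply x hx]
  set H := hfun ε (‖x‖^2)
  set C := 2 * hderiv ε (‖x‖^2)
  set A := ‖x‖^(ε-1)
  set B := ‖x‖^(-ε-1)
  simp only [if_true, if_neg (by decide : ¬ ((0:Fin 2) = 1)),
    if_neg (by decide : ¬ ((1:Fin 2) = 0)), if_pos rfl]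
  linear_combination (2*H*C + C^2*(x 0^2 + x 1^2 + ‖x‖^2)) * hsum +
    (H + A - B + H + C*(‖x‖^2) + ε*(A+B)) * hH +
    (H + C*(‖x‖^2) + ε*(A+B)) * hCs

lemma frobNorm_U {ε : ℝ} (x : V2) (hx : x ≠ 0) :
    frobNorm (grad (Ufield ε) x) = Gfun ε ‖x‖ := by
  rw [frobNorm, frobNormSq_U x hx, Gfun]

lemma Gfun_bounds {ε : ℝ} (hε0 : 0 < ε) (hε1 : ε < 1) {r : ℝ} (hr : 1 < r) :
    ε * r^(ε-1) ≤ Gfun ε r ∧ Gfun ε r ≤ 3 * r^(ε-1) := by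
  have hr0 : (0:ℝ) < r := by linarith
  set A := r^(ε-1) with hA
  set B := r^(-ε-1) with hB
  have hA0 : 0 < A := Real.rpow_pos_of_pos hr0 _
  have hB0 : 0 < B := Real.rpow_pos_of_pos hr0 _
  have hBA : B ≤ A := Real.rpow_le_rpow_of_exponent_le hr.le (by linarith)
  constructor
  · rw [Gfun]
    have h1 : (ε*A)^2 ≤ (A - B)^2 + ε^2*(A+B)^2 := by
      have e : ε^2*A^2 ≤ ε^2*(A+B)^2 :=
        mul_le_mul_of_nonneg_left (by nlinarith) (sq_nonneg ε)
      nlinarith [sq_nonneg (A-B)]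
    calc ε * A = Real.sqrt ((ε*A)^2) := (Real.sqrt_sq (by positivity)).symm
      _ ≤ _ := Real.sqrt_le_sqrt h1
  · rw [Gfun]
    have h1 : (A - B)^2 + ε^2*(A+B)^2 ≤ (3*A)^2 := by
      have e1 : (A-B)^2 ≤ A^2 := by nlinarith
      have e2 : ε^2 ≤ 1 := by nlinarith
      have e3 : (A+B)^2 ≤ 4*A^2 := by nlinarith
      have e4 : ε^2*(A+B)^2 ≤ 1*(4*A^2) := mul_le_mul e2 e3 (sq_nonneg _) zero_le_one
      nlinarith [sq_nonneg A]
    calc Real.sqrt ((A - B)^2 + ε^2*(A+B)^2) ≤ Real.sqrt ((3*A)^2) := Real.sqrt_le_sqrt h1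
      _ = 3*A := Real.sqrt_sq (by positivity)

lemma lintegral_norm_eq (f : ℝ → ℝ≥0∞) (hf : Measurable f) :
    ∫⁻ x : V2, f ‖x‖ =
      (volume : Measure V2).toSphere univ * ∫⁻ r in Ioi (0:ℝ), ENNReal.ofReal r * f r := by
  have hdim : Module.finrank ℝ V2 - 1 = 1 := by
    simp [finrank_euclideanSpace_fin]
  have h0 : ∫⁻ x : V2, f ‖x‖ =
      ∫⁻ x : ({0}ᶜ : Set V2), f ‖(x : V2)‖ ∂((volume : Measure V2).comap (↑)) := by
    rw [lintegral_subtype_comap (measurableSet_singleton (0:V2)).compl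
      (fun a : V2 => f ‖a‖), MeasureTheory.restrict_compl_singleton]
  rw [h0]
  have mp := Measure.measurePreserving_homeomorphUnitSphereProd (volume : Measure V2)
  rw [hdim] at mp
  have hg : Measurable fun p : sphere (0:V2) 1 × Ioi (0:ℝ) => f p.2.1 :=
    hf.comp (measurable_subtype_coe.comp measurable_snd)
  have h1 : ∫⁻ x : ({0}ᶜ : Set V2), f ‖(x : V2)‖ ∂((volume : Measure V2).comap (↑)) =
      ∫⁻ p : sphere (0:V2) 1 × Ioi (0:ℝ), f p.2.1
        ∂((volume : Measure V2).toSphere.prod (Measure.volumeIoiPow 1)) := by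
    rw [← mp.lintegral_comp hg]
    simp
  have h2 : ∫⁻ y : Ioi (0:ℝ), f ↑y ∂(Measure.volumeIoiPow 1) =
      ∫⁻ r in Ioi (0:ℝ), ENNReal.ofReal r * f r := by
    calc ∫⁻ y : Ioi (0:ℝ), f ↑y ∂(Measure.volumeIoiPow 1)
        = ∫⁻ y : Ioi (0:ℝ), (fun r : ℝ => ENNReal.ofReal (r^1) * f r) ↑y
            ∂(Measure.comap Subtype.val volume) := by
          rw [Measure.volumeIoiPow, lintegral_withDensity_eq_lintegral_mul _
            ((measurable_subtype_coe.pow_const 1).ennreal_ofReal)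
            (show Measurable fun y : Ioi (0:ℝ) => f ↑y from hf.comp measurable_subtype_coe)]
          rfl
      _ = ∫⁻ r in Ioi (0:ℝ), ENNReal.ofReal (r^1) * f r :=
          lintegral_subtype_comap (μ := volume) measurableSet_Ioi
            (fun r : ℝ => ENNReal.ofReal (r^1) * f r)
      _ = ∫⁻ r in Ioi (0:ℝ), ENNReal.ofReal r * f r := by simp [pow_one]
  rw [h1, lintegral_prod _ hg.aemeasurable]
  simp only [lintegral_const]
  rw [h2, mul_comm]

lemma lint_rpow_Ioi_one (p : ℝ) :
    (∫⁻ r in Ioi (1:ℝ), ENNReal.ofReal (r ^ p)) < ⊤ ↔ p < -1 := by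
  rw [lt_top_iff_ne_top, lintegral_ofReal_ne_top_iff_integrable
    (by fun_prop : Measurable fun r : ℝ => r ^ p).aestronglyMeasurable ?_]
  · exact integrableOn_Ioi_rpow_iff zero_lt_one
  · filter_upwards [ae_restrict_mem measurableSet_Ioi] with r hr
    exact Real.rpow_nonneg (by linarith [mem_Ioi.mp hr]) p

/-- De Giorgi-type counter-example, sharp integrability: `u` vanishes on the
unit circle, and `∇u ∈ L^q` outside the unit disk iff `q > 2/(1-ε)`; in
particular `∇u ∉ L²` there. -/
theorem deGiorgi_sharp_integrability (ξ : ℝ) (hξ : ξ ≠ 0) :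
    (∀ x : V2, ‖x‖ = 1 → deGiorgiField ξ x = 0) ∧
    (∀ q : ℝ, 1 < q →
      ((∫⁻ x in {x : V2 | 1 < ‖x‖},
          ENNReal.ofReal (frobNorm (grad (deGiorgiField ξ) x) ^ q)) < ⊤ ↔
        2 / (1 - |ξ| / Real.sqrt (4 + ξ ^ 2)) < q)) ∧
    ¬ (∫⁻ x in {x : V2 | 1 < ‖x‖},
        ENNReal.ofReal (frobNorm (grad (deGiorgiField ξ) x) ^ (2 : ℝ))) < ⊤ := by
  set ε := |ξ| / Real.sqrt (4 + ξ ^ 2) with hεdef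
  have h4 : (0:ℝ) < 4 + ξ^2 := by positivity
  have hsq : 0 < Real.sqrt (4+ξ^2) := Real.sqrt_pos.mpr h4
  have hε0 : 0 < ε := div_pos (abs_pos.mpr hξ) hsq
  have hε1 : ε < 1 := by
    rw [hεdef, div_lt_one hsq]
    calc |ξ| = Real.sqrt (ξ^2) := (Real.sqrt_sq_eq_abs ξ).symm
      _ < Real.sqrt (4+ξ^2) := Real.sqrt_lt_sqrt (sq_nonneg ξ) (by linarith)
  -- the field coincides with the auxiliary field
  have hUeq : deGiorgiField ξ = Ufield ε := by
    funext x
    by_cases hx : x = 0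
    · simp [deGiorgiField, Ufield, hx]
    · have hr : (0:ℝ) < ‖x‖ := norm_pos_iff.mpr hx
      rw [deGiorgiField, Ufield, smul_smul, hfun, rpow_sq_half _ _ hr, rpow_sq_half _ _ hr]
      congr 1
      have hinv : ‖x‖⁻¹ = ‖x‖ ^ (-1:ℝ) := (Real.rpow_neg_one _).symm
      rw [hinv, sub_mul, ← Real.rpow_add hr, ← Real.rpow_add hr, ← hεdef]
      norm_num
      ring_nf
  -- first bullet
  refine ⟨?_, ?_⟩
  · intro x hx
    rw [deGiorgiField, hx]
    simp
  -- main iff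
  have key : ∀ q : ℝ, 1 < q →
      ((∫⁻ x in {x : V2 | 1 < ‖x‖},
          ENNReal.ofReal (frobNorm (grad (deGiorgiField ξ) x) ^ q)) < ⊤ ↔
        2 / (1 - ε) < q) := by
    intro q hq
    have hq0 : (0:ℝ) < q := by linarith
    set f : ℝ → ℝ≥0∞ :=
      fun r => if 1 < r then ENNReal.ofReal (Gfun ε r ^ q) else 0 with hfdef
    have hfmeas : Measurable f := by
      have hm : Measurable fun r : ℝ => ENNReal.ofReal (Gfun ε r ^ q) := by
        simp only [Gfun]
        fun_prop
      exact Measurable.ite measurableSet_Ioi hm measurable_const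
    have hset : MeasurableSet {x : V2 | 1 < ‖x‖} :=
      (isOpen_lt continuous_const continuous_norm).measurableSet
    have hind : ∀ x : V2,
        {x : V2 | 1 < ‖x‖}.indicator
          (fun x => ENNReal.ofReal (frobNorm (grad (deGiorgiField ξ) x) ^ q)) x = f ‖x‖ := by
      intro x
      by_cases hx : 1 < ‖x‖
      · rw [indicator_of_mem (show x ∈ {x : V2 | 1 < ‖x‖} from hx)]
        have hx0 : x ≠ 0 := by
          intro h; rw [h, norm_zero] at hx; linarith
        rw [hUeq, frobNorm_U x hx0, hfdef]
        simp [hx]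
      · rw [indicator_of_notMem (show x ∉ {x : V2 | 1 < ‖x‖} from hx), hfdef]
        simp [hx]
    have hrw : (∫⁻ x in {x : V2 | 1 < ‖x‖},
        ENNReal.ofReal (frobNorm (grad (deGiorgiField ξ) x) ^ q)) =
        (volume : Measure V2).toSphere univ *
          ∫⁻ r in Ioi (0:ℝ), ENNReal.ofReal r * f r := by
      rw [← lintegral_indicator hset, lintegral_congr hind, lintegral_norm_eq f hfmeas]
    -- reduce the radial integral to (1, ∞)
    have hsplit : (∫⁻ r in Ioi (0:ℝ), ENNReal.ofReal r * f r) =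
        ∫⁻ r in Ioi (1:ℝ), ENNReal.ofReal r * f r := by
      rw [← Ioc_union_Ioi_eq_Ioi (zero_le_one), lintegral_union measurableSet_Ioi
        Ioc_disjoint_Ioi_same]
      have h0 : (∫⁻ r in Ioc (0:ℝ) 1, ENNReal.ofReal r * f r) = 0 := by
        rw [setLIntegral_congr_fun measurableSet_Ioc
          ((fun r hr => by
            rw [hfdef]
            simp [not_lt.mpr hr.2] : ∀ r ∈ Ioc (0:ℝ) 1,
              ENNReal.ofReal r * f r = 0))]
        simp
      rw [h0, zero_add]
    set p : ℝ := (ε-1)*q + 1 with hpdef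
    -- pointwise bounds on (1, ∞)
    have hbound : ∀ r ∈ Ioi (1:ℝ),
        ENNReal.ofReal (ε^q * r^p) ≤ ENNReal.ofReal r * f r ∧
        ENNReal.ofReal r * f r ≤ ENNReal.ofReal (3^q * r^p) := by
      intro r hr
      rw [mem_Ioi] at hr
      have hr0 : (0:ℝ) < r := by linarith
      have hGb := Gfun_bounds hε0 hε1 hr
      have hA0 : (0:ℝ) < r^(ε-1) := Real.rpow_pos_of_pos hr0 _
      have hG0 : 0 ≤ Gfun ε r := le_trans (by positivity) hGb.1
      have hfr : f r = ENNReal.ofReal (Gfun ε r ^ q) := by rw [hfdef]; simp [hr]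
      have hmul : ENNReal.ofReal r * f r = ENNReal.ofReal (r * Gfun ε r ^ q) := by
        rw [hfr, ENNReal.ofReal_mul hr0.le]
      have hAq : (r^(ε-1))^q = r^((ε-1)*q) := by
        rw [← Real.rpow_mul hr0.le]
      have hrp : r * r^((ε-1)*q) = r^p := by
        rw [hpdef, Real.rpow_add_one hr0.ne', mul_comm]
      constructor
      · rw [hmul]
        apply ENNReal.ofReal_le_ofReal
        have h1 : (ε * r^(ε-1))^q ≤ Gfun ε r ^ q :=
          Real.rpow_le_rpow (by positivity) hGb.1 hq0.le
        rw [Real.mul_rpow hε0.le hA0.le, hAq] at h1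
        calc ε^q * r^p = ε^q * (r * r^((ε-1)*q)) := by rw [hrp]
          _ = r * (ε^q * r^((ε-1)*q)) := by ring
          _ ≤ r * Gfun ε r ^ q := by
              apply mul_le_mul_of_nonneg_left h1 hr0.le
      · rw [hmul]
        apply ENNReal.ofReal_le_ofReal
        have h1 : Gfun ε r ^ q ≤ (3 * r^(ε-1))^q :=
          Real.rpow_le_rpow hG0 hGb.2 hq0.le
        rw [Real.mul_rpow (by norm_num) hA0.le, hAq] at h1
        calc r * Gfun ε r ^ q ≤ r * (3^q * r^((ε-1)*q)) :=
            mul_le_mul_of_nonneg_left h1 hr0.le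
          _ = 3^q * (r * r^((ε-1)*q)) := by ring
          _ = 3^q * r^p := by rw [hrp]
    -- the radial integral over (1,∞) is finite iff p < -1
    have hJiff : (∫⁻ r in Ioi (1:ℝ), ENNReal.ofReal r * f r) < ⊤ ↔ p < -1 := by
      constructor
      · intro hfin
        by_contra hp
        push_neg at hp
        have hKtop : (∫⁻ r in Ioi (1:ℝ), ENNReal.ofReal (r ^ p)) = ⊤ := by
          by_contra hK
          exact hp.not_gt ((lint_rpow_Ioi_one p).mp (lt_top_iff_ne_top.mpr hK))
        have hle : ENNReal.ofReal (ε^q) * (∫⁻ r in Ioi (1:ℝ), ENNReal.ofReal (r ^ p)) ≤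
            ∫⁻ r in Ioi (1:ℝ), ENNReal.ofReal r * f r := by
          rw [← lintegral_const_mul' _ _ ENNReal.ofReal_ne_top]
          apply setLIntegral_mono' measurableSet_Ioi
          intro r hr
          calc ENNReal.ofReal (ε^q) * ENNReal.ofReal (r^p)
              = ENNReal.ofReal (ε^q * r^p) := (ENNReal.ofReal_mul (by positivity)).symm
            _ ≤ _ := (hbound r hr).1
        rw [hKtop, ENNReal.mul_top (by
          simp only [ne_eq, ENNReal.ofReal_eq_zero, not_le]
          positivity)] at hle
        exact hfin.ne (top_le_iff.mp hle)
      · intro hp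
        have hKfin : (∫⁻ r in Ioi (1:ℝ), ENNReal.ofReal (r ^ p)) < ⊤ :=
          (lint_rpow_Ioi_one p).mpr hp
        have hle : (∫⁻ r in Ioi (1:ℝ), ENNReal.ofReal r * f r) ≤
            ENNReal.ofReal (3^q) * ∫⁻ r in Ioi (1:ℝ), ENNReal.ofReal (r ^ p) := by
          rw [← lintegral_const_mul' _ _ ENNReal.ofReal_ne_top]
          apply setLIntegral_mono' measurableSet_Ioi
          intro r hr
          calc ENNReal.ofReal r * f r ≤ ENNReal.ofReal (3^q * r^p) := (hbound r hr).2
            _ = ENNReal.ofReal (3^q) * ENNReal.ofReal (r^p) :=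
                ENNReal.ofReal_mul (by positivity)
        exact lt_of_le_of_lt hle (ENNReal.mul_lt_top ENNReal.ofReal_lt_top hKfin)
    -- remove the constant
    have hc_ne_top : (volume : Measure V2).toSphere univ ≠ ⊤ := measure_ne_top _ _
    have hc_ne_zero : (volume : Measure V2).toSphere univ ≠ 0 := by
      rw [Measure.toSphere_apply_univ]
      exact mul_ne_zero (by norm_num [finrank_euclideanSpace_fin])
        (measure_ball_pos volume (0:V2) one_pos).ne'
    rw [hrw, hsplit]
    have hmuliff : (volume : Measure V2).toSphere univ *
        (∫⁻ r in Ioi (1:ℝ), ENNReal.ofReal r * f r) < ⊤ ↔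
        (∫⁻ r in Ioi (1:ℝ), ENNReal.ofReal r * f r) < ⊤ := by
      constructor
      · intro h
        by_contra hJ
        rw [top_le_iff.mp (not_lt.mp hJ), ENNReal.mul_top hc_ne_zero] at h
        exact lt_irrefl _ h
      · intro h
        exact ENNReal.mul_lt_top hc_ne_top.lt_top h
    rw [hmuliff, hJiff]
    -- arithmetic
    have h1ε : (0:ℝ) < 1 - ε := by linarith
    rw [hpdef, div_lt_iff₀ h1ε]
    constructor <;> intro h <;> nlinarith
  refine ⟨fun q hq => key q hq, ?_⟩
  -- q = 2 case
  rw [(key 2 one_lt_two)]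
  have h1ε : (0:ℝ) < 1 - ε := by linarith
  rw [div_lt_iff₀ h1ε]
  nlinarith
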